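/- arXiv:1603.06281 — 3 statements merged into one kernel-verified Lean document; each statement's English description precedes it below -/
import Mathlib

section
/- Let f(T,V) = kTV/(1 + k₁T + k₂V) with k, k₁, k₂ ≥ 0. For T, V, V̂ > 0 with k₂ > 0, the expression V/V̂ - f(T,V)/f(T,V̂) + 1 - (V/V̂)·(f(T,V̂)/f(T,V)) is nonnegative, and equals zero if and only if V = V̂. -/
theorem f_expr_nonneg (k k₁ k₂ T V Vh : ℝ)
    (hk : 0 < k) (hk₁ : 0 ≤ k₁) (hk₂ : 0 < k₂)
    (hT : 0 < T) (hV : 0 < V) (hVh : 0 < Vh) :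
    let f : ℝ → ℝ → ℝ := fun T V => k * T * V / (1 + k₁ * T + k₂ * V)
    0 ≤ V / Vh - f T V / f T Vh + 1 - (V / Vh) * (f T Vh / f T V) ∧
    (V / Vh - f T V / f T Vh + 1 - (V / Vh) * (f T Vh / f T V) = 0 ↔ V = Vh) := by
  intro f
  have ha : (0:ℝ) < 1 + k₁ * T + k₂ * V := by positivity
  have hb : (0:ℝ) < 1 + k₁ * T + k₂ * Vh := by positivity
  have hc : (0:ℝ) < 1 + k₁ * T := by positivity
  have key : V / Vh - f T V / f T Vh + 1 - (V / Vh) * (f T Vh / f T V)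
      = k₂ * (1 + k₁ * T) * (V - Vh) ^ 2 /
        (Vh * (1 + k₁ * T + k₂ * V) * (1 + k₁ * T + k₂ * Vh)) := by
    simp only [f]
    field_simp
    ring
  have hD : (0:ℝ) < Vh * (1 + k₁ * T + k₂ * V) * (1 + k₁ * T + k₂ * Vh) := by positivity
  constructor
  · rw [key]; positivity
  · rw [key]
    constructor
    · intro h
      have hN : k₂ * (1 + k₁ * T) * (V - Vh) ^ 2 = 0 := by
        field_simp at h
        linarith [h]
      have : (V - Vh) ^ 2 = 0 := by
        rcases mul_eq_zero.mp hN with h' | h'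
        · exfalso; rcases mul_eq_zero.mp h' with h'' | h'' <;> nlinarith
        · exact h'
      have := pow_eq_zero_iff (n := 2) (by norm_num) |>.mp this
      linarith
    · intro h; rw [h]; ring_nf
end

section
/- Under assumptions (H2) and (H3), the point (T̂, T̂*, V̂, Ŷ, Â) with T̂* = γ/β, V̂ = b/g, Â = (Nδγg - βcb)/(βqb), Ŷ = (λ - dT̂ - e^{ωh}δT̂*)/(e^{ωh} p T̂*), and T̂ the positive root of the quadratic d g k₁ T² + (d k₂ b + d g - λ g k₁ + k b)T - λ(g + k₂b) = 0, satisfies the stationary system: 0 = λ - dT̂ - f(T̂,V̂); 0 = e^{-ωh} f(T̂,V̂) - δT̂* - pŶT̂*; 0 = NδT̂* - cV̂ - qÂV̂; 0 = βT̂*Ŷ - γŶ; 0 = gÂV̂ - bÂ, where f(T,V) = kTV/(1+k₁T+k₂V). -/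
theorem equilibrium_satisfies_system
    (lam d k δ p N c q β γ g b ω h k₁ k₂ : ℝ)
    (hlam : 0 < lam) (hd : 0 < d) (hk : 0 < k) (hδ : 0 < δ) (hp : 0 < p)
    (hN : 0 < N) (hc : 0 < c) (hq : 0 < q) (hβ : 0 < β) (hγ : 0 < γ)
    (hg : 0 < g) (hb : 0 < b) (hω : 0 < ω) (hh : 0 < h)
    (hk₁ : 0 ≤ k₁) (hk₂ : 0 ≤ k₂)
    (Th Ts Vh Yh Ah : ℝ)
    (hTs : Ts = γ / β) (hVh : Vh = b / g)
    (hAh : Ah = (N * δ * γ * g - β * c * b) / (β * q * b))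
    (hThroot : 0 < Th ∧
      d * g * k₁ * Th^2 + (d * k₂ * b + d * g - lam * g * k₁ + k * b) * Th
        - lam * (g + k₂ * b) = 0)
    (hYh : Yh = (lam - d * Th - Real.exp (ω * h) * δ * Ts)
        / (Real.exp (ω * h) * p * Ts))
    (H2 : N * δ * γ * g > β * c * b)
    (H3 : lam > d * Th + δ * γ / β * Real.exp (ω * h)) :
    let f : ℝ → ℝ → ℝ := fun T V => k * T * V / (1 + k₁ * T + k₂ * V)
    0 = lam - d * Th - f Th Vh ∧
    0 = Real.exp (-(ω * h)) * f Th Vh - δ * Ts - p * Yh * Ts ∧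
    0 = N * δ * Ts - c * Vh - q * Ah * Vh ∧
    0 = β * Ts * Yh - γ * Yh ∧
    0 = g * Ah * Vh - b * Ah := by
  intro f
  obtain ⟨hThpos, hquad⟩ := hThroot
  have hgne : g ≠ 0 := hg.ne'
  have hβne : β ≠ 0 := hβ.ne'
  have hγne : γ ≠ 0 := hγ.ne'
  have hpne : p ≠ 0 := hp.ne'
  have hbne : b ≠ 0 := hb.ne'
  have hqne : q ≠ 0 := hq.ne'
  have hE : Real.exp (ω * h) ≠ 0 := (Real.exp_pos _).ne'
  have hVpos : 0 < Vh := hVh ▸ div_pos hb hg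
  have hden : (0:ℝ) < 1 + k₁ * Th + k₂ * Vh := by positivity
  have hdenne : (1 + k₁ * Th + k₂ * Vh) ≠ 0 := hden.ne'
  have hTsne : Ts ≠ 0 := by rw [hTs]; positivity
  have heq1 : (0:ℝ) = lam - d * Th - f Th Vh := by
    show (0:ℝ) = lam - d * Th - k * Th * Vh / (1 + k₁ * Th + k₂ * Vh)
    rw [eq_sub_iff_add_eq, zero_add, div_eq_iff hdenne]
    subst hVh
    field_simp
    nlinarith [hquad]
  refine ⟨heq1, ?_, ?_, ?_, ?_⟩
  · have hf : f Th Vh = lam - d * Th := by linarith [heq1]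
    rw [hf, hYh, Real.exp_neg]
    field_simp
    ring
  · rw [hTs, hVh, hAh]
    field_simp
    ring
  · rw [hTs]; field_simp; ring
  · rw [hVh]; field_simp; ring
end

section
/- Under assumptions (H2) and (H3), the system 0 = λ - dT̂ - f(T̂,V̂), 0 = e^{-ωh} f(T̂,V̂) - δT̂* - pŶT̂*, 0 = NδT̂* - cV̂ - qÂV̂, 0 = βT̂*Ŷ - γŶ, 0 = gÂV̂ - bÂ has a unique solution with all five coordinates strictly positive. -/
set_option maxHeartbeats 1000000


theorem equilibrium_exists_unique
    (lam d k δ p N c q β γ g b ω h k₁ k₂ : ℝ)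
    (hlam : 0 < lam) (hd : 0 < d) (hk : 0 < k) (hδ : 0 < δ) (hp : 0 < p)
    (hN : 0 < N) (hc : 0 < c) (hq : 0 < q) (hβ : 0 < β) (hγ : 0 < γ)
    (hg : 0 < g) (hb : 0 < b) (hω : 0 < ω) (hh : 0 < h)
    (hk₁ : 0 ≤ k₁) (hk₂ : 0 ≤ k₂)
    (Th : ℝ)
    (hThroot : 0 < Th ∧
      d * g * k₁ * Th^2 + (d * k₂ * b + d * g - lam * g * k₁ + k * b) * Th
        - lam * (g + k₂ * b) = 0)
    (H2 : N * δ * γ * g > β * c * b)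
    (H3 : lam > d * Th + δ * γ / β * Real.exp (ω * h)) :
    let f : ℝ → ℝ → ℝ := fun T V => k * T * V / (1 + k₁ * T + k₂ * V)
    ∃! x : ℝ × ℝ × ℝ × ℝ × ℝ,
      (0 < x.1 ∧ 0 < x.2.1 ∧ 0 < x.2.2.1 ∧ 0 < x.2.2.2.1 ∧ 0 < x.2.2.2.2) ∧
      0 = lam - d * x.1 - f x.1 x.2.2.1 ∧
      0 = Real.exp (-(ω * h)) * f x.1 x.2.2.1 - δ * x.2.1 - p * x.2.2.2.1 * x.2.1 ∧
      0 = N * δ * x.2.1 - c * x.2.2.1 - q * x.2.2.2.2 * x.2.2.1 ∧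
      0 = β * x.2.1 * x.2.2.2.1 - γ * x.2.2.2.1 ∧
      0 = g * x.2.2.2.2 * x.2.2.1 - b * x.2.2.2.2 := by
  intro f
  obtain ⟨hTh, hquad⟩ := hThroot
  have hE : (0:ℝ) < Real.exp (-(ω*h)) := Real.exp_pos _
  have hEE : Real.exp (-(ω*h)) * Real.exp (ω*h) = 1 := by
    rw [← Real.exp_add, neg_add_cancel, Real.exp_zero]
  set V0 : ℝ := b / g with hV0
  set S0 : ℝ := γ / β with hS0
  set Y0 : ℝ := (Real.exp (-(ω*h)) * (lam - d*Th) * β / γ - δ) / p with hY0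
  set A0 : ℝ := (N*δ*γ*g/(β*b) - c) / q with hA0
  have hV0pos : 0 < V0 := div_pos hb hg
  have hS0pos : 0 < S0 := div_pos hγ hβ
  have hlamd : δ*γ/β * Real.exp (ω*h) < lam - d*Th := by linarith
  have h2 : δ*γ/β < Real.exp (-(ω*h)) * (lam - d*Th) := by
    have := mul_lt_mul_of_pos_left hlamd hE
    calc δ*γ/β = Real.exp (-(ω*h)) * (δ*γ/β * Real.exp (ω*h)) := by
          rw [mul_comm (δ*γ/β), ← mul_assoc, hEE, one_mul]
      _ < _ := this
  have hnum : 0 < Real.exp (-(ω*h)) * (lam - d*Th) * β / γ - δ := by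
    rw [sub_pos, lt_div_iff₀ hγ]
    have h2' := mul_lt_mul_of_pos_right h2 hβ
    have : δ*γ/β * β = δ*γ := by field_simp
    nlinarith
  have hY0pos : 0 < Y0 := div_pos hnum hp
  have hA0num : 0 < N*δ*γ*g/(β*b) - c := by
    rw [sub_pos, lt_div_iff₀ (by positivity)]
    nlinarith
  have hA0pos : 0 < A0 := div_pos hA0num hq
  have hD : 0 < 1 + k₁ * Th + k₂ * V0 := by
    have := mul_nonneg hk₁ hTh.le
    have := mul_nonneg hk₂ hV0pos.le
    linarith
  -- equation 1 at the candidate point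
  have hkey : k * Th * V0 = (lam - d * Th) * (1 + k₁ * Th + k₂ * V0) := by
    rw [hV0]
    field_simp
    linear_combination hquad
  have hfval : k * Th * V0 / (1 + k₁ * Th + k₂ * V0) = lam - d * Th := by
    rw [div_eq_iff (ne_of_gt hD)]; linear_combination hkey
  have he1 : (0:ℝ) = lam - d * Th - f Th V0 := by
    show (0:ℝ) = lam - d * Th - k * Th * V0 / (1 + k₁ * Th + k₂ * V0)
    rw [hfval]; ring
  refine ⟨(Th, S0, V0, Y0, A0), ⟨⟨hTh, hS0pos, hV0pos, hY0pos, hA0pos⟩, ?_, ?_, ?_, ?_, ?_⟩, ?_⟩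
  · exact he1
  · show (0:ℝ) = Real.exp (-(ω*h)) * (k * Th * V0 / (1 + k₁ * Th + k₂ * V0)) - δ * S0 - p * Y0 * S0
    rw [hfval, hS0, hY0]
    field_simp
    ring
  · show (0:ℝ) = N * δ * S0 - c * V0 - q * A0 * V0
    rw [hS0, hV0, hA0]
    field_simp
    ring
  · show (0:ℝ) = β * S0 * Y0 - γ * Y0
    rw [hS0]; field_simp; ring
  · show (0:ℝ) = g * A0 * V0 - b * A0
    rw [hV0]; field_simp; ring
  · rintro ⟨T, S, V, Y, A⟩ ⟨⟨hT, hS, hV, hY, hA⟩, e1, e2, e3, e4, e5⟩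
    simp only at e1 e2 e3 e4 e5 hT hS hV hY hA
    -- from e5 : V = b/g
    have hgV : g * V = b := by
      have h5 : A * (g * V - b) = 0 := by linear_combination -e5
      rcases mul_eq_zero.mp h5 with h | h
      · exact absurd h (ne_of_gt hA)
      · linarith only [h]
    have hVeq : V = V0 := by rw [hV0]; field_simp; linarith only [hgV]
    -- from e4 : S = γ/β
    have hβS : β * S = γ := by
      have h4 : Y * (β * S - γ) = 0 := by linear_combination -e4
      rcases mul_eq_zero.mp h4 with h | h
      · exact absurd h (ne_of_gt hY)
      · linarith only [h]
    have hSeq : S = S0 := by rw [hS0]; field_simp; linarith only [hβS]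
    -- from e1 : T satisfies the quadratic, hence T = Th
    have hDT : 0 < 1 + k₁ * T + k₂ * V := by
      have h1 := mul_nonneg hk₁ hT.le
      have h2' := mul_nonneg hk₂ hV.le
      linarith only [h1, h2']
    have hfT : k * T * V / (1 + k₁ * T + k₂ * V) = lam - d * T := by linarith only [e1]
    have e1' : k * T * V = (lam - d * T) * (1 + k₁ * T + k₂ * V) :=
      (div_eq_iff (ne_of_gt hDT)).mp hfT
    have hquadT : d * g * k₁ * T^2 + (d * k₂ * b + d * g - lam * g * k₁ + k * b) * T
        - lam * (g + k₂ * b) = 0 := by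
      linear_combination g * e1' - (k*T - k₂*lam + k₂*d*T) * hgV
    have hTeq : T = Th := by
      have key : (T - Th) * (d * g * k₁ * (T + Th) + (d * k₂ * b + d * g - lam * g * k₁ + k * b)) = 0 := by
        linear_combination hquadT - hquad
      have hBpos : 0 < d * g * k₁ * Th + (d * k₂ * b + d * g - lam * g * k₁ + k * b) := by
        have hrw : d * g * k₁ * Th + (d * k₂ * b + d * g - lam * g * k₁ + k * b)
            = lam * (g + k₂ * b) / Th := by
          rw [eq_div_iff (ne_of_gt hTh)]; linear_combination hquad
        rw [hrw]; positivity
      have hpos2 : 0 < d * g * k₁ * (T + Th) + (d * k₂ * b + d * g - lam * g * k₁ + k * b) := by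
        have h0 : 0 ≤ d * g * k₁ * T := by positivity
        have hr : d * g * k₁ * (T + Th) + (d * k₂ * b + d * g - lam * g * k₁ + k * b)
            = d * g * k₁ * T + (d * g * k₁ * Th + (d * k₂ * b + d * g - lam * g * k₁ + k * b)) := by
          ring
        rw [hr]; linarith only [h0, hBpos]
      rcases mul_eq_zero.mp key with h | h
      · linarith only [h]
      · linarith only [h, hpos2]
    -- from e2 : Y = Y0
    have e2' : Real.exp (-(ω*h)) * (lam - d * Th) - δ * S0 - p * Y * S0 = 0 := by
      rw [← hTeq, ← hfT, ← hSeq]; linarith only [e2]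
    have hYeq : Y = Y0 := by
      have hY' : Y = (Real.exp (-(ω*h)) * (lam - d*Th) - δ*S0) / (p*S0) := by
        rw [eq_div_iff (by positivity)]; linarith only [e2']
      rw [hY', hY0, hS0]
      field_simp
    -- from e3 : A = A0
    have e3' : N * δ * S0 - c * V0 - q * A * V0 = 0 := by
      rw [← hSeq, ← hVeq]; linarith only [e3]
    have hAeq : A = A0 := by
      have hA' : A = (N * δ * S0 - c * V0) / (q * V0) := by
        rw [eq_div_iff (by positivity)]; linarith only [e3']
      rw [hA', hA0, hS0, hV0]
      field_simp
    simp [hTeq, hSeq, hVeq, hYeq, hAeq]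
end
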